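/- Let θ > 0 and ε ∈ (0,1]. For each n ∈ ℕ let A_n : ℝ → ℝ be nondecreasing and right-continuous with A_n(0) = 0, and let A : ℝ → ℝ be nondecreasing and right-continuous with A(0) = 0. For each n let p_n : [0,θ] → [0,1] be right-continuous with left limits at every point of (0,θ], and let p : [0,θ] → [0,1] be right-continuous and of bounded variation on [0,θ]. Assume sup_{t ∈ [0,θ]} |A_n(t) − A(t)| → 0 and sup_{t ∈ [0,θ]} |p_n(t) − p(t)| → 0 as n → ∞. Then sup_{t ∈ [0,θ]} | ∫_{(0,t]} ( p_n(s−) ∨ ε )^{−1} μ_{A_n}(ds) − ∫_{(0,t]} ( p(s−) ∨ ε )^{−1} μ_A(ds) | → 0 as n → ∞. -/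

import Mathlib

open Set Filter MeasureTheory Topology

open Function

lemma abs_sub'' (u v : ℝ) : |u - v| ≤ |u| + |v| := by
  calc |u - v| = |u + (-v)| := by ring_nf
  _ ≤ |u| + |-v| := abs_add_le _ _
  _ = |u| + |v| := by rw [abs_neg]

lemma inv_max_lip {ε : ℝ} (hε : 0 < ε) (x y : ℝ) :
    |(max x ε)⁻¹ - (max y ε)⁻¹| ≤ ε⁻¹ * ε⁻¹ * |x - y| := by
  have hx : 0 < max x ε := lt_of_lt_of_le hε (le_max_right _ _)
  have hy : 0 < max y ε := lt_of_lt_of_le hε (le_max_right _ _)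
  have h1 : (max x ε)⁻¹ - (max y ε)⁻¹ = (max y ε - max x ε) / (max x ε * max y ε) := by
    field_simp
  have h2 : |max y ε - max x ε| ≤ |x - y| := by
    rw [abs_sub_comm]
    exact abs_max_sub_max_le_abs x y ε
  rw [h1, abs_div, abs_mul, abs_of_pos hx, abs_of_pos hy]
  rw [div_le_iff₀ (by positivity)]
  calc |max y ε - max x ε| ≤ |x - y| := h2
  _ = ε⁻¹ * ε⁻¹ * |x-y| * (ε * ε) := by field_simp
  _ ≤ ε⁻¹ * ε⁻¹ * |x - y| * (max x ε * max y ε) := by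
      apply mul_le_mul_of_nonneg_left
      · exact mul_le_mul (le_max_right _ _) (le_max_right _ _) hε.le hx.le
      · positivity

lemma abs_sub_le_of_tendsto_left {θ s d : ℝ} {h₁ h₂ : ℝ → ℝ} {l₁ l₂ : ℝ}
    (hs : 0 < s) (hsθ : s ≤ θ)
    (H1 : Tendsto h₁ (𝓝[<] s) (𝓝 l₁)) (H2 : Tendsto h₂ (𝓝[<] s) (𝓝 l₂))
    (hd : ∀ u ∈ Icc (0:ℝ) θ, |h₁ u - h₂ u| ≤ d) : |l₁ - l₂| ≤ d := by
  have hmem : Ioo (0:ℝ) s ∈ 𝓝[<] s := Ioo_mem_nhdsLT_of_mem ⟨hs, le_refl s⟩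
  have hT : Tendsto (fun u => |h₁ u - h₂ u|) (𝓝[<] s) (𝓝 |l₁ - l₂|) := (H1.sub H2).abs
  exact le_of_tendsto hT (eventually_of_mem hmem
    (fun u hu => hd u ⟨hu.1.le, hu.2.le.trans hsθ⟩))

lemma stieltjes_measure_ordConnected_diff_le {θ d : ℝ} (hθ : 0 ≤ θ)
    (F G : StieltjesFunction ℝ) (hd : ∀ x ∈ Icc (0:ℝ) θ, |F x - G x| ≤ d)
    {T : Set ℝ} (hT : T.OrdConnected) (hTsub : T ⊆ Ioc 0 θ) :
    |(F.measure T).toReal - (G.measure T).toReal| ≤ 2 * d := by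
  have hd0 : 0 ≤ d := le_trans (abs_nonneg _) (hd 0 ⟨le_refl 0, hθ⟩)
  have hdL : ∀ c, 0 < c → c ≤ θ → |leftLim (↑F) c - leftLim (↑G) c| ≤ d := fun c hc hcθ =>
    abs_sub_le_of_tendsto_left hc hcθ (F.mono.tendsto_leftLim c) (G.mono.tendsto_leftLim c) hd
  rcases T.eq_empty_or_nonempty with rfl | hne
  · simp [hd0]
  set a := sInf T with ha_def
  set b := sSup T with hb_def
  have hbddb : BddAbove T := ⟨θ, fun x hx => (hTsub hx).2⟩
  have hbdda : BddBelow T := ⟨0, fun x hx => (hTsub hx).1.le⟩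
  have ha0 : 0 ≤ a := le_csInf hne (fun x hx => (hTsub hx).1.le)
  have hab : a ≤ b := csInf_le_csSup hne hbdda hbddb
  have hbθ : b ≤ θ := csSup_le hne (fun x hx => (hTsub hx).2)
  have hbpos : 0 < b := by
    obtain ⟨x, hx⟩ := hne
    exact lt_of_lt_of_le (hTsub hx).1 (le_csSup hbddb hx)
  have haθ : a ≤ θ := hab.trans hbθ
  have haIcc : a ∈ Icc (0:ℝ) θ := ⟨ha0, haθ⟩
  have hbIcc : b ∈ Icc (0:ℝ) θ := ⟨hbpos.le, hbθ⟩
  have habs : ∀ u v u' v' : ℝ, |u - v| ≤ d → |u' - v'| ≤ d →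
      |(u - u') - (v - v')| ≤ 2 * d := by
    intro u v u' v' h1 h2
    have : (u - u') - (v - v') = (u - v) - (u' - v') := by ring
    rw [this]
    calc |(u - v) - (u' - v')| ≤ |u - v| + |u' - v'| := abs_sub'' _ _
    _ ≤ 2 * d := by linarith
  have hmem := hT.isPreconnected.mem_intervals
  simp only [mem_insert_iff, mem_singleton_iff, ← ha_def, ← hb_def] at hmem
  rcases hmem with h | h | h | h | h | h | h | h | h | h
  · -- Icc a b
    have haT : a ∈ T := by rw [h]; exact ⟨le_refl a, hab⟩
    have ha0' : 0 < a := (hTsub haT).1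
    rw [h, F.measure_Icc, G.measure_Icc,
      ENNReal.toReal_ofReal (by linarith [F.mono.leftLim_le (le_refl a), F.mono hab]),
      ENNReal.toReal_ofReal (by linarith [G.mono.leftLim_le (le_refl a), G.mono hab])]
    exact habs _ _ _ _ (hd b hbIcc) (hdL a ha0' haθ)
  · -- Ico a b
    have haT : a ∈ T := by
      rw [h]; refine ⟨le_refl a, lt_of_le_of_ne hab ?_⟩
      intro hab'
      rw [← hab'] at h
      simp [Ico_self] at h
      exact hne.ne_empty h
    have ha0' : 0 < a := (hTsub haT).1
    rw [h, F.measure_Ico, G.measure_Ico,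
      ENNReal.toReal_ofReal (by linarith [F.mono.leftLim hab]),
      ENNReal.toReal_ofReal (by linarith [G.mono.leftLim hab])]
    exact habs _ _ _ _ (hdL b hbpos hbθ) (hdL a ha0' haθ)
  · -- Ioc a b
    rw [h, F.measure_Ioc, G.measure_Ioc,
      ENNReal.toReal_ofReal (by linarith [F.mono hab]),
      ENNReal.toReal_ofReal (by linarith [G.mono hab])]
    exact habs _ _ _ _ (hd b hbIcc) (hd a haIcc)
  · -- Ioo a b
    have haltb : a < b := by
      rcases hne with ⟨x, hx⟩
      rw [h] at hx
      exact lt_trans hx.1 hx.2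
    rw [h, F.measure_Ioo, G.measure_Ioo,
      ENNReal.toReal_ofReal (by linarith [F.mono.le_leftLim haltb]),
      ENNReal.toReal_ofReal (by linarith [G.mono.le_leftLim haltb])]
    exact habs _ _ _ _ (hdL b hbpos hbθ) (hd a haIcc)
  · exact absurd ((hTsub (h ▸ (by exact le_of_lt (by linarith) : a ≤ θ + 1) : θ + 1 ∈ T))).2 (by linarith)
  · exact absurd ((hTsub (h ▸ (by linarith : a < θ + 1) : θ + 1 ∈ T))).2 (by linarith)
  · exact absurd ((hTsub (h ▸ (by linarith : (0:ℝ) ≤ b) : (0:ℝ) ∈ T))).1 (lt_irrefl 0)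
  · exact absurd ((hTsub (h ▸ (by linarith : (0:ℝ) < b) : (0:ℝ) ∈ T))).1 (lt_irrefl 0)
  · exact absurd ((hTsub (h ▸ (mem_univ (0:ℝ)) : (0:ℝ) ∈ T))).1 (lt_irrefl 0)
  · exact absurd h hne.ne_empty

lemma integral_monotone_core {θ : ℝ} (hθ : 0 < θ) (G : StieltjesFunction ℝ)
    {g : ℝ → ℝ} (hg : MonotoneOn g (Ioc 0 θ)) {C : ℝ} (hC : 0 ≤ C)
    (hgC : ∀ s ∈ Ioc (0:ℝ) θ, |g s| ≤ C) :
    ∀ ρ > 0, ∃ d₀ > 0, ∀ F : StieltjesFunction ℝ,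
      (∀ x ∈ Icc (0:ℝ) θ, |F x - G x| ≤ d₀) →
      ∀ t ∈ Icc (0:ℝ) θ,
      |∫ s in Ioc (0:ℝ) t, g s ∂F.measure - ∫ s in Ioc (0:ℝ) t, g s ∂G.measure| ≤ ρ := by
  intro ρ hρ
  set MG : ℝ := (G.measure (Ioc 0 θ)).toReal with hMG_def
  have hMG : 0 ≤ MG := ENNReal.toReal_nonneg
  set δ : ℝ := min 1 (ρ / (2 * (2 * MG + 3))) with hδ_def
  have hδ : 0 < δ := lt_min one_pos (by positivity)
  have hδ1 : δ ≤ 1 := min_le_left _ _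
  have hδρ : δ ≤ ρ / (2 * (2 * MG + 3)) := min_le_right _ _
  set m₀ : ℤ := ⌈-C / δ⌉ with hm₀_def
  set m₁ : ℤ := ⌈C / δ⌉ with hm₁_def
  set K : ℝ := 2 * δ * |(m₀ : ℝ)| + 2 * δ * ((m₁ - m₀).toNat : ℝ) with hK_def
  have hK : 0 ≤ K := by positivity
  set d : ℝ := min 1 (ρ / (2 * (K + 1))) with hd_def
  have hd : 0 < d := lt_min one_pos (by positivity)
  have hd1 : d ≤ 1 := min_le_left _ _
  have hdρ : d ≤ ρ / (2 * (K + 1)) := min_le_right _ _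
  refine ⟨d, hd, ?_⟩
  intro F hF t ht
  -- discretized function and level sets
  set gh : ℝ → ℝ := fun s => δ * (⌈g s / δ⌉ : ℝ) with hgh_def
  set S : ℤ → Set ℝ := fun j => {u | u ∈ Ioc (0:ℝ) θ ∧ j ≤ ⌈g u / δ⌉} with hS_def
  have hsub : Ioc (0:ℝ) t ⊆ Ioc 0 θ := Ioc_subset_Ioc_right ht.2
  have hSsub : ∀ j, S j ⊆ Ioc (0:ℝ) θ := fun j u hu => hu.1
  have hSord : ∀ j, (S j).OrdConnected := by
    intro j
    constructor
    intro x hx y hy z hz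
    have hzI : z ∈ Ioc (0:ℝ) θ := ⟨lt_of_lt_of_le hx.1.1 hz.1, hz.2.trans hy.1.2⟩
    refine ⟨hzI, hx.2.trans (Int.ceil_le_ceil ?_)⟩
    gcongr
    exact hg hx.1 hzI hz.1
  have hSmeas : ∀ j, MeasurableSet (S j) := fun j => (hSord j).measurableSet
  -- ceil bounds
  have hceil : ∀ s ∈ Ioc (0:ℝ) θ, m₀ ≤ ⌈g s / δ⌉ ∧ ⌈g s / δ⌉ ≤ m₁ := by
    intro s hs
    have h := abs_le.1 (hgC s hs)
    constructor
    · apply Int.ceil_le_ceil; gcongr; exact h.1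
    · apply Int.ceil_le_ceil; gcongr; exact h.2
  -- pointwise bound |gh - g| ≤ δ and |gh| ≤ C + 1
  have hgh_close : ∀ s, g s ≤ gh s ∧ gh s ≤ g s + δ := by
    intro s
    constructor
    · rw [hgh_def]
      calc g s = δ * (g s / δ) := by field_simp
      _ ≤ δ * (⌈g s / δ⌉ : ℝ) := by gcongr; exact Int.le_ceil _
    · rw [hgh_def]
      calc δ * (⌈g s / δ⌉ : ℝ) ≤ δ * (g s / δ + 1) := by
            gcongr; exact (Int.ceil_lt_add_one _).le
      _ = g s + δ := by field_simp
  -- finiteness of restricted measures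
  have hfin : ∀ H : StieltjesFunction ℝ, IsFiniteMeasure (H.measure.restrict (Ioc (0:ℝ) t)) := by
    intro H
    constructor
    rw [Measure.restrict_apply_univ, H.measure_Ioc]
    exact ENNReal.ofReal_lt_top
  -- integrability of g
  have hgae : ∀ H : StieltjesFunction ℝ, AEMeasurable g (H.measure.restrict (Ioc (0:ℝ) t)) :=
    fun H => aemeasurable_restrict_of_monotoneOn measurableSet_Ioc (hg.mono hsub)
  have hgint : ∀ H : StieltjesFunction ℝ, Integrable g (H.measure.restrict (Ioc (0:ℝ) t)) := by
    intro H
    haveI := hfin H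
    refine Integrable.mono' (integrable_const C) (hgae H).aestronglyMeasurable ?_
    refine (ae_restrict_iff' measurableSet_Ioc).2 (ae_of_all _ fun s hs => ?_)
    rw [Real.norm_eq_abs]; exact hgC s (hsub hs)
  -- integrability of gh
  have hghae : ∀ H : StieltjesFunction ℝ, AEMeasurable gh (H.measure.restrict (Ioc (0:ℝ) t)) := by
    intro H
    have h1 : AEMeasurable (fun s => (⌈g s / δ⌉ : ℤ)) (H.measure.restrict (Ioc (0:ℝ) t)) :=
      Int.measurable_ceil.comp_aemeasurable ((hgae H).div_const δ)
    have h2 : AEMeasurable (fun s => ((⌈g s / δ⌉ : ℤ) : ℝ)) (H.measure.restrict (Ioc (0:ℝ) t)) :=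
      measurable_from_top.comp_aemeasurable h1
    exact h2.const_mul δ
  have hghint : ∀ H : StieltjesFunction ℝ, Integrable gh (H.measure.restrict (Ioc (0:ℝ) t)) := by
    intro H
    haveI := hfin H
    refine Integrable.mono' (integrable_const (C + 1)) (hghae H).aestronglyMeasurable ?_
    refine (ae_restrict_iff' measurableSet_Ioc).2 (ae_of_all _ fun s hs => ?_)
    have h1 := hgh_close s
    have h2 := abs_le.1 (hgC s (hsub hs))
    rw [Real.norm_eq_abs, abs_le]
    constructor <;> linarith
  -- step 1 : |∫ g - ∫ gh| ≤ δ * total mass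
  have hstep1 : ∀ H : StieltjesFunction ℝ,
      |∫ s in Ioc (0:ℝ) t, g s ∂H.measure - ∫ s in Ioc (0:ℝ) t, gh s ∂H.measure| ≤
        δ * (H.measure (Ioc 0 t)).toReal := by
    intro H
    haveI := hfin H
    rw [← integral_sub (hgint H) (hghint H)]
    have := norm_integral_le_of_norm_le_const (μ := H.measure.restrict (Ioc (0:ℝ) t))
      (f := fun s => g s - gh s) (C := δ) ?_
    · rw [Real.norm_eq_abs] at this
      rw [measureReal_def, Measure.restrict_apply_univ] at this
      linarith [this]
    · refine (ae_restrict_iff' measurableSet_Ioc).2 (ae_of_all _ fun s hs => ?_)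
      have h1 := hgh_close s
      rw [Real.norm_eq_abs]
      refine abs_le.2 ⟨?_, ?_⟩
      · show -δ ≤ g s - gh s; linarith [h1.1, h1.2]
      · show g s - gh s ≤ δ; linarith [h1.1, h1.2]
  -- step 2 : representation of ∫ gh
  have hrep : ∀ H : StieltjesFunction ℝ,
      ∫ s in Ioc (0:ℝ) t, gh s ∂H.measure =
        δ * (m₀:ℝ) * (H.measure (Ioc 0 t)).toReal
        + ∑ j ∈ Finset.Ioc m₀ m₁, δ * (H.measure (S j ∩ Ioc 0 t)).toReal := by
    intro H
    haveI := hfin H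
    have hcong : EqOn gh (fun s => δ * (m₀:ℝ)
        + ∑ j ∈ Finset.Ioc m₀ m₁, δ * (S j).indicator (fun _ => (1:ℝ)) s) (Ioc (0:ℝ) t) := by
      intro s hs
      have hsθ := hsub hs
      obtain ⟨hk₀, hk₁⟩ := hceil s hsθ
      have hind : ∀ j : ℤ, (S j).indicator (fun _ => (1:ℝ)) s
          = if j ≤ ⌈g s / δ⌉ then 1 else 0 := by
        intro j
        rw [indicator_apply]
        by_cases hj : j ≤ ⌈g s / δ⌉
        · rw [if_pos (show s ∈ S j from ⟨hsθ, hj⟩), if_pos hj]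
        · rw [if_neg (show s ∉ S j from fun hmem => hj hmem.2), if_neg hj]
      simp only [hind]
      rw [← Finset.mul_sum, Finset.sum_boole]
      have hfilt : (Finset.Ioc m₀ m₁).filter (fun j => j ≤ ⌈g s / δ⌉)
          = Finset.Ioc m₀ ⌈g s / δ⌉ := by
        ext j
        simp only [Finset.mem_filter, Finset.mem_Ioc]
        exact ⟨fun h => ⟨h.1.1, h.2⟩, fun h => ⟨⟨h.1, h.2.trans hk₁⟩, h.2⟩⟩
      rw [hfilt, Int.card_Ioc]
      have hcast : (((⌈g s / δ⌉ - m₀).toNat : ℕ) : ℝ) = (⌈g s / δ⌉ : ℝ) - (m₀ : ℝ) := by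
        rw [← Int.cast_natCast, Int.toNat_of_nonneg (sub_nonneg.2 hk₀)]
        push_cast
        ring
      rw [hcast]
      show δ * (⌈g s / δ⌉ : ℝ) = _
      ring
    rw [setIntegral_congr_fun measurableSet_Ioc hcong]
    have hintind : ∀ j ∈ Finset.Ioc m₀ m₁, Integrable
        (fun s => δ * (S j).indicator (fun _ => (1:ℝ)) s)
        (H.measure.restrict (Ioc (0:ℝ) t)) :=
      fun j _ => ((integrable_const (1:ℝ)).indicator (hSmeas j)).const_mul δ
    rw [integral_add (integrable_const _) (integrable_finset_sum _ hintind),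
      integral_const, integral_finset_sum _ hintind]
    congr 1
    · rw [measureReal_def, Measure.restrict_apply_univ, smul_eq_mul]
      ring
    · refine Finset.sum_congr rfl (fun j _ => ?_)
      rw [integral_const_mul, integral_indicator_const (1:ℝ) (hSmeas j),
        measureReal_def, Measure.restrict_apply (hSmeas j), smul_eq_mul, mul_one]
  -- comparison of masses
  have hmass : ∀ H : StieltjesFunction ℝ,
      (H.measure (Ioc (0:ℝ) t)).toReal ≤ (H.measure (Ioc (0:ℝ) θ)).toReal := by
    intro H
    apply ENNReal.toReal_mono
    · rw [H.measure_Ioc]; exact ENNReal.ofReal_ne_top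
    · exact measure_mono (Ioc_subset_Ioc_right ht.2)
  have hMF : (F.measure (Ioc (0:ℝ) θ)).toReal ≤ MG + 2 * d := by
    have h := abs_le.1 (stieltjes_measure_ordConnected_diff_le hθ.le F G hF
      ordConnected_Ioc (subset_refl _))
    rw [← hMG_def] at h
    linarith [h.1, h.2]
  have hKL1 : |(F.measure (Ioc (0:ℝ) t)).toReal - (G.measure (Ioc (0:ℝ) t)).toReal| ≤ 2 * d :=
    stieltjes_measure_ordConnected_diff_le hθ.le F G hF ordConnected_Ioc
      (Ioc_subset_Ioc_right ht.2)
  have hKL2 : ∀ j, |(F.measure (S j ∩ Ioc (0:ℝ) t)).toReal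
      - (G.measure (S j ∩ Ioc (0:ℝ) t)).toReal| ≤ 2 * d :=
    fun j => stieltjes_measure_ordConnected_diff_le hθ.le F G hF
      ((hSord j).inter ordConnected_Ioc) ((inter_subset_left).trans (hSsub j))
  -- middle bound
  have hmid : |∫ s in Ioc (0:ℝ) t, gh s ∂F.measure - ∫ s in Ioc (0:ℝ) t, gh s ∂G.measure|
      ≤ K * d := by
    rw [hrep F, hrep G]
    set xF := (F.measure (Ioc (0:ℝ) t)).toReal with hxF
    set xG := (G.measure (Ioc (0:ℝ) t)).toReal with hxG
    have heq : δ * (m₀:ℝ) * xF + (∑ j ∈ Finset.Ioc m₀ m₁, δ * (F.measure (S j ∩ Ioc (0:ℝ) t)).toReal)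
        - (δ * (m₀:ℝ) * xG + ∑ j ∈ Finset.Ioc m₀ m₁, δ * (G.measure (S j ∩ Ioc (0:ℝ) t)).toReal)
        = δ * (m₀:ℝ) * (xF - xG)
          + ∑ j ∈ Finset.Ioc m₀ m₁, δ * ((F.measure (S j ∩ Ioc (0:ℝ) t)).toReal
            - (G.measure (S j ∩ Ioc (0:ℝ) t)).toReal) := by
      simp only [mul_sub]
      rw [Finset.sum_sub_distrib]
      ring
    rw [heq]
    calc |δ * (m₀:ℝ) * (xF - xG) + ∑ j ∈ Finset.Ioc m₀ m₁, δ * ((F.measure (S j ∩ Ioc (0:ℝ) t)).toReal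
            - (G.measure (S j ∩ Ioc (0:ℝ) t)).toReal)|
        ≤ |δ * (m₀:ℝ) * (xF - xG)| + |∑ j ∈ Finset.Ioc m₀ m₁, δ * ((F.measure (S j ∩ Ioc (0:ℝ) t)).toReal
            - (G.measure (S j ∩ Ioc (0:ℝ) t)).toReal)| := abs_add_le _ _
      _ ≤ δ * |(m₀:ℝ)| * (2 * d) + ((m₁ - m₀).toNat : ℝ) * (δ * (2 * d)) := by
          apply add_le_add
          · calc |δ * (m₀:ℝ) * (xF - xG)| = δ * |(m₀:ℝ)| * |xF - xG| := by
                  rw [abs_mul, abs_mul, abs_of_pos hδ]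
              _ ≤ δ * |(m₀:ℝ)| * (2 * d) :=
                  mul_le_mul_of_nonneg_left hKL1 (by positivity)
          · refine le_trans (Finset.abs_sum_le_sum_abs _ _) ?_
            have hcard : (Finset.Ioc m₀ m₁).card = (m₁ - m₀).toNat := Int.card_Ioc _ _
            calc ∑ j ∈ Finset.Ioc m₀ m₁, |δ * ((F.measure (S j ∩ Ioc (0:ℝ) t)).toReal
                  - (G.measure (S j ∩ Ioc (0:ℝ) t)).toReal)|
                ≤ ∑ _j ∈ Finset.Ioc m₀ m₁, δ * (2 * d) := by
                  refine Finset.sum_le_sum (fun j _ => ?_)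
                  rw [abs_mul, abs_of_pos hδ]
                  exact mul_le_mul_of_nonneg_left (hKL2 j) hδ.le
              _ = ((m₁ - m₀).toNat : ℝ) * (δ * (2 * d)) := by
                  rw [Finset.sum_const, hcard, nsmul_eq_mul]
      _ = K * d := by rw [hK_def]; ring
  -- final assembly
  have hT1 := hstep1 F
  have hT3 := hstep1 G
  have h1 : δ * (2 * (2 * MG + 3)) ≤ ρ := (le_div_iff₀ (by positivity)).1 hδρ
  have h2 : d * (2 * (K + 1)) ≤ ρ := (le_div_iff₀ (by positivity)).1 hdρ
  have hmF : δ * (F.measure (Ioc (0:ℝ) t)).toReal ≤ δ * (MG + 2 * d) :=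
    mul_le_mul_of_nonneg_left (le_trans (hmass F) hMF) hδ.le
  have hmG : δ * (G.measure (Ioc (0:ℝ) t)).toReal ≤ δ * MG := by
    apply mul_le_mul_of_nonneg_left _ hδ.le
    rw [hMG_def]
    exact hmass G
  calc |∫ s in Ioc (0:ℝ) t, g s ∂F.measure - ∫ s in Ioc (0:ℝ) t, g s ∂G.measure|
      ≤ |∫ s in Ioc (0:ℝ) t, g s ∂F.measure - ∫ s in Ioc (0:ℝ) t, gh s ∂F.measure|
        + |∫ s in Ioc (0:ℝ) t, gh s ∂F.measure - ∫ s in Ioc (0:ℝ) t, g s ∂G.measure| :=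
        abs_sub_le _ _ _
    _ ≤ |∫ s in Ioc (0:ℝ) t, g s ∂F.measure - ∫ s in Ioc (0:ℝ) t, gh s ∂F.measure|
        + (|∫ s in Ioc (0:ℝ) t, gh s ∂F.measure - ∫ s in Ioc (0:ℝ) t, gh s ∂G.measure|
          + |∫ s in Ioc (0:ℝ) t, gh s ∂G.measure - ∫ s in Ioc (0:ℝ) t, g s ∂G.measure|) := by
        gcongr
        exact abs_sub_le _ _ _
    _ ≤ δ * (F.measure (Ioc (0:ℝ) t)).toReal + (K * d + δ * (G.measure (Ioc (0:ℝ) t)).toReal) := by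
        gcongr
        rw [abs_sub_comm]
        exact hT3
    _ ≤ ρ := by nlinarith [mul_le_mul_of_nonneg_left hd1 hδ.le, hδ.le, hd.le, hK, hMG]

lemma integral_monotone_uniform {θ : ℝ} (hθ : 0 < θ) (A : ℕ → StieltjesFunction ℝ)
    (Alim : StieltjesFunction ℝ)
    (hAconv : TendstoUniformlyOn (fun n t => A n t) (fun t => Alim t) atTop (Icc 0 θ))
    {g : ℝ → ℝ} (hg : MonotoneOn g (Ioc 0 θ)) {C : ℝ} (hC : 0 ≤ C)
    (hgC : ∀ s ∈ Ioc (0:ℝ) θ, |g s| ≤ C) :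
    TendstoUniformlyOn (fun n t => ∫ s in Ioc (0:ℝ) t, g s ∂(A n).measure)
      (fun t => ∫ s in Ioc (0:ℝ) t, g s ∂Alim.measure) atTop (Icc 0 θ) := by
  rw [Metric.tendstoUniformlyOn_iff]
  intro ρ hρ
  obtain ⟨d₀, hd₀, hcore⟩ := integral_monotone_core hθ Alim hg hC hgC (ρ/2) (by positivity)
  have hev := (Metric.tendstoUniformlyOn_iff.1 hAconv) d₀ hd₀
  filter_upwards [hev] with n hn t ht
  have hFd : ∀ x ∈ Icc (0:ℝ) θ, |A n x - Alim x| ≤ d₀ := fun x hx => by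
    have h := hn x hx
    rw [Real.dist_eq, abs_sub_comm] at h
    exact h.le
  have h := hcore (A n) hFd t ht
  rw [Real.dist_eq, abs_sub_comm]
  linarith

set_option maxHeartbeats 1600000 in
/-- Deterministic core of the strong uniform consistency of the perturbed conditional
Nelson–Aalen estimator: if `A_n → A` uniformly on `[0,θ]` (nondecreasing, right-continuous,
vanishing at `0`) and `p_n → p` uniformly on `[0,θ]` (càdlàg with values in `[0,1]`, the
limit `p` right-continuous and of bounded variation), then
`t ↦ ∫_{(0,t]} (p_n(s−) ∨ ε)⁻¹ μ_{A_n}(ds)` converges to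
`t ↦ ∫_{(0,t]} (p(s−) ∨ ε)⁻¹ μ_A(ds)` uniformly on `[0,θ]`. -/
theorem conditional_nelson_aalen_uniform_consistency
    (θ : ℝ) (hθ : 0 < θ) (ε : ℝ) (hε : 0 < ε) (hε1 : ε ≤ 1)
    (A : ℕ → StieltjesFunction ℝ) (hA0 : ∀ n, A n 0 = 0)
    (Alim : StieltjesFunction ℝ) (hAlim0 : Alim 0 = 0)
    (p : ℕ → ℝ → ℝ)
    (hp01 : ∀ n, ∀ t ∈ Icc (0:ℝ) θ, p n t ∈ Icc (0:ℝ) 1)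
    (hprc : ∀ n, ∀ t ∈ Ico (0:ℝ) θ, Tendsto (p n) (𝓝[≥] t) (𝓝 (p n t)))
    (hpll : ∀ n, ∀ t ∈ Ioc (0:ℝ) θ, ∃ l : ℝ, Tendsto (p n) (𝓝[<] t) (𝓝 l))
    (q : ℝ → ℝ)
    (hq01 : ∀ t ∈ Icc (0:ℝ) θ, q t ∈ Icc (0:ℝ) 1)
    (hqrc : ∀ t ∈ Ico (0:ℝ) θ, Tendsto q (𝓝[≥] t) (𝓝 (q t)))
    (hqbv : ∃ q₁ q₂ : ℝ → ℝ, MonotoneOn q₁ (Icc 0 θ) ∧ MonotoneOn q₂ (Icc 0 θ) ∧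
      ∀ t ∈ Icc (0:ℝ) θ, q t = q₁ t - q₂ t)
    (hAconv : TendstoUniformlyOn (fun n t => A n t) (fun t => Alim t) atTop (Icc 0 θ))
    (hpconv : TendstoUniformlyOn p q atTop (Icc 0 θ)) :
    TendstoUniformlyOn
      (fun n t => ∫ s in Ioc (0:ℝ) t, (max (Function.leftLim (p n) s) ε)⁻¹ ∂(A n).measure)
      (fun t => ∫ s in Ioc (0:ℝ) t, (max (Function.leftLim q s) ε)⁻¹ ∂Alim.measure)
      atTop (Icc 0 θ) := by
  classical
  obtain ⟨q₁, q₂, hq1m, hq2m, hqd⟩ := hqbv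
  -- clamp to [0, θ]
  set π : ℝ → ℝ := fun s => max 0 (min s θ) with hπ_def
  have hπmono : Monotone π := fun a b hab => max_le_max le_rfl (min_le_min hab le_rfl)
  have hπmem : ∀ s, π s ∈ Icc (0:ℝ) θ :=
    fun s => ⟨le_max_left _ _, max_le hθ.le (min_le_right _ _)⟩
  set Q₁ : ℝ → ℝ := fun s => q₁ (π s) with hQ₁_def
  set Q₂ : ℝ → ℝ := fun s => q₂ (π s) with hQ₂_def
  have hQ₁mono : Monotone Q₁ := fun a b hab => hq1m (hπmem a) (hπmem b) (hπmono hab)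
  have hQ₂mono : Monotone Q₂ := fun a b hab => hq2m (hπmem a) (hπmem b) (hπmono hab)
  set L₁ : ℝ → ℝ := leftLim Q₁ with hL₁_def
  set L₂ : ℝ → ℝ := leftLim Q₂ with hL₂_def
  have hL₁mono : Monotone L₁ := hQ₁mono.leftLim
  have hL₂mono : Monotone L₂ := hQ₂mono.leftLim
  have hnebot : ∀ s : ℝ, 𝓝[<] s ≠ ⊥ := fun s => Filter.NeBot.ne inferInstance
  -- left limits of q
  have hqll : ∀ s ∈ Ioc (0:ℝ) θ, Tendsto q (𝓝[<] s) (𝓝 (L₁ s - L₂ s)) := by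
    intro s hs
    refine Tendsto.congr' ?_ ((hQ₁mono.tendsto_leftLim s).sub (hQ₂mono.tendsto_leftLim s))
    filter_upwards [Ioo_mem_nhdsLT_of_mem (⟨hs.1, le_refl s⟩ : s ∈ Ioc 0 s)] with u hu
    have huI : u ∈ Icc (0:ℝ) θ := ⟨hu.1.le, hu.2.le.trans hs.2⟩
    have hπu : π u = u := by
      rw [hπ_def]
      dsimp only
      rw [min_eq_left huI.2, max_eq_right huI.1]
    show Q₁ u - Q₂ u = q u
    rw [hQ₁_def, hQ₂_def]
    dsimp only
    rw [hπu, (hqd u huI)]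
  have hqleft : ∀ s ∈ Ioc (0:ℝ) θ, leftLim q s = L₁ s - L₂ s :=
    fun s hs => leftLim_eq_of_tendsto (hqll s hs)
  -- the integrands
  set c : ℝ := ε⁻¹ * ε⁻¹ with hc_def
  have hc : 0 < c := by positivity
  set f : ℝ → ℝ := fun s => (max (leftLim q s) ε)⁻¹ with hf_def
  set g₂ : ℝ → ℝ := fun s => c * (L₁ s + L₂ s) with hg₂_def
  set g₁ : ℝ → ℝ := fun s => f s + g₂ s with hg₁_def
  have hfbound : ∀ s, |f s| ≤ ε⁻¹ := by
    intro s
    have h1 : 0 < max (leftLim q s) ε := lt_of_lt_of_le hε (le_max_right _ _)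
    rw [hf_def]
    dsimp only
    rw [abs_of_pos (inv_pos.2 h1)]
    exact inv_anti₀ hε (le_max_right _ _)
  have hg₂mono : Monotone g₂ := fun a b hab => by
    have := hL₁mono hab; have := hL₂mono hab
    rw [hg₂_def]; dsimp only
    apply mul_le_mul_of_nonneg_left _ hc.le
    linarith
  have hg₁mono : MonotoneOn g₁ (Ioc (0:ℝ) θ) := by
    intro x hx y hy hxy
    have hfl : |f y - f x| ≤ c * |leftLim q y - leftLim q x| := by
      rw [hf_def, hc_def]; exact inv_max_lip hε _ _
    rw [hqleft x hx, hqleft y hy] at hfl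
    have h1 := hL₁mono hxy
    have h2 := hL₂mono hxy
    have h3 : |(L₁ y - L₂ y) - (L₁ x - L₂ x)| ≤ (L₁ y - L₁ x) + (L₂ y - L₂ x) := by
      rw [abs_le]; constructor <;> [skip; skip] <;>
        · cases' abs_cases ((L₁ y - L₂ y) - (L₁ x - L₂ x)) with h h <;> linarith
    have h4 := abs_le.1 hfl
    have h5 : c * |(L₁ y - L₂ y) - (L₁ x - L₂ x)| ≤ c * ((L₁ y - L₁ x) + (L₂ y - L₂ x)) :=
      mul_le_mul_of_nonneg_left h3 hc.le
    show g₁ x ≤ g₁ y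
    rw [hg₁_def]
    dsimp only
    rw [hg₂_def]
    dsimp only
    nlinarith [h4.1, h4.2]
  -- bounds for g₁ g₂
  set C₂ : ℝ := c * (|L₁ 0| + |L₁ θ| + |L₂ 0| + |L₂ θ|) with hC₂_def
  have hC₂ : 0 ≤ C₂ := by positivity
  have hg₂bound : ∀ s ∈ Ioc (0:ℝ) θ, |g₂ s| ≤ C₂ := by
    intro s hs
    have h1 : L₁ 0 ≤ L₁ s := hL₁mono hs.1.le
    have h2 : L₁ s ≤ L₁ θ := hL₁mono hs.2
    have h3 : L₂ 0 ≤ L₂ s := hL₂mono hs.1.le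
    have h4 : L₂ s ≤ L₂ θ := hL₂mono hs.2
    have e1 := abs_le.1 (le_refl |L₁ 0|)
    rw [hg₂_def]; dsimp only
    rw [hC₂_def, abs_mul, abs_of_pos hc]
    apply mul_le_mul_of_nonneg_left _ hc.le
    cases' abs_cases (L₁ s + L₂ s) with h h <;>
      cases' abs_cases (L₁ 0) with e1 e1 <;>
      cases' abs_cases (L₁ θ) with e2 e2 <;>
      cases' abs_cases (L₂ 0) with e3 e3 <;>
      cases' abs_cases (L₂ θ) with e4 e4 <;> linarith
  set C₁ : ℝ := ε⁻¹ + C₂ with hC₁_def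
  have hC₁ : 0 ≤ C₁ := by positivity
  have hg₁bound : ∀ s ∈ Ioc (0:ℝ) θ, |g₁ s| ≤ C₁ := by
    intro s hs
    have h1 := hfbound s
    have h2 := hg₂bound s hs
    rw [hg₁_def]; dsimp only
    rw [hC₁_def]
    calc |f s + g₂ s| ≤ |f s| + |g₂ s| := abs_add_le _ _
    _ ≤ ε⁻¹ + C₂ := add_le_add h1 h2
  -- uniform convergence for the monotone parts
  have hmon1 := integral_monotone_uniform hθ A Alim hAconv hg₁mono hC₁ hg₁bound
  have hmon2 := integral_monotone_uniform hθ A Alim hAconv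
    (fun x _ y _ hxy => hg₂mono hxy) hC₂ hg₂bound
  -- generic facts
  have habs : ∀ x : ℝ, |(max x ε)⁻¹| ≤ ε⁻¹ := by
    intro x
    rw [abs_of_pos (inv_pos.2 (lt_of_lt_of_le hε (le_max_right _ _)))]
    exact inv_anti₀ hε (le_max_right _ _)
  have hcont : Continuous (fun x : ℝ => (max x ε)⁻¹) :=
    (continuous_id.max continuous_const).inv₀
      (fun x => ne_of_gt (lt_of_lt_of_le hε (le_max_right _ _)))
  have hfin : ∀ (H : StieltjesFunction ℝ) (t : ℝ),
      IsFiniteMeasure (H.measure.restrict (Ioc (0:ℝ) t)) := by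
    intro H t
    constructor
    rw [Measure.restrict_apply_univ, H.measure_Ioc]
    exact ENNReal.ofReal_lt_top
  have hfeq : f = fun s => g₁ s - g₂ s := by
    funext s
    rw [hg₁_def]
    ring
  have hints : ∀ (H : StieltjesFunction ℝ), ∀ t ∈ Icc (0:ℝ) θ,
      Integrable g₁ (H.measure.restrict (Ioc (0:ℝ) t)) ∧
      Integrable g₂ (H.measure.restrict (Ioc (0:ℝ) t)) ∧
      Integrable f (H.measure.restrict (Ioc (0:ℝ) t)) := by
    intro H t ht
    haveI := hfin H t
    have hsub : Ioc (0:ℝ) t ⊆ Ioc 0 θ := Ioc_subset_Ioc_right ht.2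
    have h1ae : AEMeasurable g₁ (H.measure.restrict (Ioc (0:ℝ) t)) :=
      aemeasurable_restrict_of_monotoneOn measurableSet_Ioc (hg₁mono.mono hsub)
    have h2ae : AEMeasurable g₂ (H.measure.restrict (Ioc (0:ℝ) t)) :=
      hg₂mono.measurable.aemeasurable
    have h1 : Integrable g₁ (H.measure.restrict (Ioc (0:ℝ) t)) := by
      refine Integrable.mono' (integrable_const C₁) h1ae.aestronglyMeasurable ?_
      refine (ae_restrict_iff' measurableSet_Ioc).2 (ae_of_all _ fun s hs => ?_)
      rw [Real.norm_eq_abs]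
      exact hg₁bound s (hsub hs)
    have h2 : Integrable g₂ (H.measure.restrict (Ioc (0:ℝ) t)) := by
      refine Integrable.mono' (integrable_const C₂) h2ae.aestronglyMeasurable ?_
      refine (ae_restrict_iff' measurableSet_Ioc).2 (ae_of_all _ fun s hs => ?_)
      rw [Real.norm_eq_abs]
      exact hg₂bound s (hsub hs)
    refine ⟨h1, h2, ?_⟩
    rw [hfeq]
    exact h1.sub h2
  have hfg : ∀ (H : StieltjesFunction ℝ), ∀ t ∈ Icc (0:ℝ) θ,
      ∫ s in Ioc (0:ℝ) t, f s ∂H.measure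
        = (∫ s in Ioc (0:ℝ) t, g₁ s ∂H.measure) - ∫ s in Ioc (0:ℝ) t, g₂ s ∂H.measure := by
    intro H t ht
    obtain ⟨h1, h2, _⟩ := hints H t ht
    rw [← integral_sub h1 h2]
    refine setIntegral_congr_fun measurableSet_Ioc (fun s _ => ?_)
    rw [hfeq]
  -- left-limit measurability machinery for p n
  set r : ℕ → ℝ → ℝ := fun k s => (((⌈s * ((k:ℝ)+1)⌉ : ℤ) : ℝ) - 1) / ((k:ℝ)+1) with hr_def
  have hrmeas : ∀ (n k : ℕ), Measurable (fun s => p n (r k s)) := by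
    intro n k
    have heq2 : (fun s => p n (r k s)) =
        (fun m : ℤ => p n (((m : ℝ) - 1) / ((k:ℝ)+1))) ∘ (fun s : ℝ => ⌈s * ((k:ℝ)+1)⌉) := rfl
    rw [heq2]
    exact measurable_from_top.comp (Int.measurable_ceil.comp (measurable_id.mul_const _))
  have hrbounds : ∀ (k : ℕ) (s : ℝ), s - 1/((k:ℝ)+1) ≤ r k s ∧ r k s < s := by
    intro k s
    have hK : (0:ℝ) < (k:ℝ)+1 := by positivity
    have hup := Int.ceil_lt_add_one (s * ((k:ℝ)+1))
    have hlo := Int.le_ceil (s * ((k:ℝ)+1))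
    constructor
    · rw [hr_def]
      dsimp only
      rw [le_div_iff₀ hK]
      have hexp : (s - 1/((k:ℝ)+1)) * ((k:ℝ)+1) = s * ((k:ℝ)+1) - 1 := by
        field_simp
      rw [hexp]
      linarith
    · rw [hr_def]
      dsimp only
      rw [div_lt_iff₀ hK]
      linarith
  have hrtendsto : ∀ s : ℝ, Tendsto (fun k : ℕ => r k s) atTop (𝓝[<] s) := by
    intro s
    rw [tendsto_nhdsWithin_iff]
    constructor
    · have hlow : Tendsto (fun k : ℕ => s - 1/((k:ℝ)+1)) atTop (𝓝 s) := by
        have h0 := tendsto_one_div_add_atTop_nhds_zero_nat (𝕜 := ℝ)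
        have h2 := (tendsto_const_nhds (x := s) (f := (atTop : Filter ℕ))).sub h0
        simpa using h2
      exact tendsto_of_tendsto_of_tendsto_of_le_of_le hlow tendsto_const_nhds
        (fun k => (hrbounds k s).1) (fun k => (hrbounds k s).2.le)
    · exact Eventually.of_forall (fun k => (hrbounds k s).2)
  have hLLtendsto : ∀ n, ∀ s ∈ Ioc (0:ℝ) θ,
      Tendsto (p n) (𝓝[<] s) (𝓝 (leftLim (p n) s)) := by
    intro n s hs
    obtain ⟨l, hl⟩ := hpll n s hs
    rwa [leftLim_eq_of_tendsto hl]
  have hfnint : ∀ (n : ℕ), ∀ t ∈ Icc (0:ℝ) θ,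
      Integrable (fun s => (max (leftLim (p n) s) ε)⁻¹)
        ((A n).measure.restrict (Ioc (0:ℝ) t)) := by
    intro n t ht
    haveI := hfin (A n) t
    have hsub : Ioc (0:ℝ) t ⊆ Ioc 0 θ := Ioc_subset_Ioc_right ht.2
    have hae : AEMeasurable (leftLim (p n)) ((A n).measure.restrict (Ioc (0:ℝ) t)) := by
      refine aemeasurable_of_tendsto_metrizable_ae' (f := fun k s => p n (r k s))
        (fun k => (hrmeas n k).aemeasurable) ?_
      refine (ae_restrict_iff' measurableSet_Ioc).2 (ae_of_all _ fun s hs => ?_)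
      exact (hLLtendsto n s (hsub hs)).comp (hrtendsto s)
    refine Integrable.mono' (integrable_const ε⁻¹)
      (hcont.measurable.comp_aemeasurable hae).aestronglyMeasurable ?_
    exact ae_of_all _ (fun s => by rw [Real.norm_eq_abs]; exact habs _)
  -- part 1 estimate
  have hpart1 : ∀ (n : ℕ) (ρ' : ℝ), 0 ≤ ρ' → (∀ x ∈ Icc (0:ℝ) θ, |p n x - q x| ≤ ρ') →
      ∀ t ∈ Icc (0:ℝ) θ,
      |(∫ s in Ioc (0:ℝ) t, f s ∂(A n).measure)
        - ∫ s in Ioc (0:ℝ) t, (max (leftLim (p n) s) ε)⁻¹ ∂(A n).measure|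
      ≤ (c * ρ') * ((A n).measure (Ioc (0:ℝ) t)).toReal := by
    intro n ρ' hρ' hclose t ht
    haveI := hfin (A n) t
    have hsub : Ioc (0:ℝ) t ⊆ Ioc 0 θ := Ioc_subset_Ioc_right ht.2
    obtain ⟨_, _, hfint⟩ := hints (A n) t ht
    rw [← integral_sub hfint (hfnint n t ht)]
    have hbnd := norm_integral_le_of_norm_le_const
      (μ := (A n).measure.restrict (Ioc (0:ℝ) t))
      (f := fun s => f s - (max (leftLim (p n) s) ε)⁻¹) (C := c * ρ') ?_
    · rw [Real.norm_eq_abs, measureReal_def, Measure.restrict_apply_univ] at hbnd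
      exact hbnd
    · refine (ae_restrict_iff' measurableSet_Ioc).2 (ae_of_all _ fun s hs => ?_)
      have hsθ := hsub hs
      have h1 : |f s - (max (leftLim (p n) s) ε)⁻¹|
          ≤ c * |leftLim q s - leftLim (p n) s| := by
        rw [hf_def, hc_def]
        exact inv_max_lip hε _ _
      have h2 : |leftLim q s - leftLim (p n) s| ≤ ρ' := by
        rw [hqleft s hsθ]
        exact abs_sub_le_of_tendsto_left hsθ.1 hsθ.2 (hqll s hsθ) (hLLtendsto n s hsθ)
          (fun u hu => by rw [abs_sub_comm]; exact hclose u hu)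
      rw [Real.norm_eq_abs]
      exact le_trans h1 (mul_le_mul_of_nonneg_left h2 hc.le)
  -- mass bound
  have hmass : ∀ (n : ℕ), ∀ t ∈ Icc (0:ℝ) θ, (∀ x ∈ Icc (0:ℝ) θ, |A n x - Alim x| ≤ 1) →
      ((A n).measure (Ioc (0:ℝ) t)).toReal ≤ (Alim θ - Alim 0) + 2 := by
    intro n t ht hcl
    rw [(A n).measure_Ioc, ENNReal.toReal_ofReal (sub_nonneg.2 ((A n).mono ht.1))]
    have h1 := abs_le.1 (hcl θ ⟨hθ.le, le_refl θ⟩)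
    have h2 := abs_le.1 (hcl 0 ⟨le_refl 0, hθ.le⟩)
    have h3 := (A n).mono ht.2
    linarith [h1.1, h1.2, h2.1, h2.2, h3]
  -- final assembly
  rw [Metric.tendstoUniformlyOn_iff]
  intro ρ hρ
  set M : ℝ := Alim θ - Alim 0 with hM_def
  have hM : 0 ≤ M := sub_nonneg.2 (Alim.mono hθ.le)
  set ρ' : ℝ := ρ / (4 * (c+1) * (M+3)) with hρ'_def
  have hρ'pos : 0 < ρ' := by positivity
  have hE1 := Metric.tendstoUniformlyOn_iff.1 hmon1 (ρ/8) (by positivity)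
  have hE2 := Metric.tendstoUniformlyOn_iff.1 hmon2 (ρ/8) (by positivity)
  have hE3 := Metric.tendstoUniformlyOn_iff.1 hpconv ρ' hρ'pos
  have hE4 := Metric.tendstoUniformlyOn_iff.1 hAconv 1 one_pos
  filter_upwards [hE1, hE2, hE3, hE4] with n h1 h2 h3 h4 t ht
  have hcloseA : ∀ x ∈ Icc (0:ℝ) θ, |A n x - Alim x| ≤ 1 := fun x hx => by
    have h := h4 x hx
    rw [Real.dist_eq, abs_sub_comm] at h
    exact h.le
  have hclosep : ∀ x ∈ Icc (0:ℝ) θ, |p n x - q x| ≤ ρ' := fun x hx => by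
    have h := h3 x hx
    rw [Real.dist_eq, abs_sub_comm] at h
    exact h.le
  have hP1 := hpart1 n ρ' hρ'pos.le hclosep t ht
  have hMass := hmass n t ht hcloseA
  have hG1 := h1 t ht
  have hG2 := h2 t ht
  rw [Real.dist_eq] at hG1 hG2
  rw [Real.dist_eq]
  have key : |(∫ s in Ioc (0:ℝ) t, f s ∂Alim.measure)
      - ∫ s in Ioc (0:ℝ) t, f s ∂(A n).measure| ≤ ρ/8 + ρ/8 := by
    rw [hfg Alim t ht, hfg (A n) t ht]
    have heq3 : ((∫ s in Ioc (0:ℝ) t, g₁ s ∂Alim.measure) - ∫ s in Ioc (0:ℝ) t, g₂ s ∂Alim.measure)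
        - ((∫ s in Ioc (0:ℝ) t, g₁ s ∂(A n).measure) - ∫ s in Ioc (0:ℝ) t, g₂ s ∂(A n).measure)
        = ((∫ s in Ioc (0:ℝ) t, g₁ s ∂Alim.measure) - ∫ s in Ioc (0:ℝ) t, g₁ s ∂(A n).measure)
        - ((∫ s in Ioc (0:ℝ) t, g₂ s ∂Alim.measure) - ∫ s in Ioc (0:ℝ) t, g₂ s ∂(A n).measure) := by
      ring
    rw [heq3]
    calc |_| ≤ |(∫ s in Ioc (0:ℝ) t, g₁ s ∂Alim.measure) - ∫ s in Ioc (0:ℝ) t, g₁ s ∂(A n).measure|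
        + |(∫ s in Ioc (0:ℝ) t, g₂ s ∂Alim.measure) - ∫ s in Ioc (0:ℝ) t, g₂ s ∂(A n).measure| :=
        abs_sub'' _ _
      _ ≤ ρ/8 + ρ/8 := add_le_add hG1.le hG2.le
  have hpartfinal : (c * ρ') * ((A n).measure (Ioc (0:ℝ) t)).toReal ≤ ρ/4 := by
    have hstep : (c * ρ') * ((A n).measure (Ioc (0:ℝ) t)).toReal ≤ (c * ρ') * (M + 2) := by
      apply mul_le_mul_of_nonneg_left _ (by positivity)
      rw [hM_def]
      exact hMass
    have heq4 : (c+1) * (M+3) * ρ' = ρ/4 := by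
      rw [hρ'_def]
      field_simp
    have h5 : 0 ≤ ρ' * (c + M + 3) := by positivity
    have hring : (c+1) * (M+3) * ρ' - (c * ρ') * (M+2) = ρ' * (c + M + 3) := by ring
    clear_value ρ' M c
    linarith only [hstep, heq4, h5, hring]
  calc |(∫ s in Ioc (0:ℝ) t, f s ∂Alim.measure)
      - ∫ s in Ioc (0:ℝ) t, (max (leftLim (p n) s) ε)⁻¹ ∂(A n).measure|
      ≤ |(∫ s in Ioc (0:ℝ) t, f s ∂Alim.measure) - ∫ s in Ioc (0:ℝ) t, f s ∂(A n).measure|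
        + |(∫ s in Ioc (0:ℝ) t, f s ∂(A n).measure)
          - ∫ s in Ioc (0:ℝ) t, (max (leftLim (p n) s) ε)⁻¹ ∂(A n).measure| := abs_sub_le _ _ _
    _ ≤ (ρ/8 + ρ/8) + ρ/4 := add_le_add key (le_trans hP1 hpartfinal)
    _ < ρ := by linarith
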